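/- arXiv:1903.08199 — 4 statements merged into one kernel-verified Lean document; each statement's English description precedes it below -/
import Mathlib

section
/- Let f(X) = X − X Cᵀ (C X Cᵀ + V)⁻¹ C X where C is invertible and V ≻ 0. Then for every t ≥ 0, f(t·C⁻¹VC⁻ᵀ) = (t/(t+1))·C⁻¹VC⁻ᵀ, and in particular f(t·C⁻¹VC⁻ᵀ) ⪯ C⁻¹VC⁻ᵀ. -/
open Matrix

theorem stmt_5 (n : ℕ) (C V : Matrix (Fin n) (Fin n) ℝ)
    (hC : IsUnit C.det) (hV : V.PosDef) (t : ℝ) (ht : 0 ≤ t) :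
    (t • (C⁻¹ * V * (Cᵀ)⁻¹)
        - (t • (C⁻¹ * V * (Cᵀ)⁻¹)) * Cᵀ * (C * (t • (C⁻¹ * V * (Cᵀ)⁻¹)) * Cᵀ + V)⁻¹
            * C * (t • (C⁻¹ * V * (Cᵀ)⁻¹))
      = (t / (t + 1)) • (C⁻¹ * V * (Cᵀ)⁻¹)) ∧
    ((C⁻¹ * V * (Cᵀ)⁻¹)
        - (t • (C⁻¹ * V * (Cᵀ)⁻¹)
            - (t • (C⁻¹ * V * (Cᵀ)⁻¹)) * Cᵀ * (C * (t • (C⁻¹ * V * (Cᵀ)⁻¹)) * Cᵀ + V)⁻¹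
                * C * (t • (C⁻¹ * V * (Cᵀ)⁻¹)))).PosSemidef := by
  have hCT : IsUnit (Cᵀ).det := isUnit_det_transpose C hC
  have hVdet : IsUnit V.det := isUnit_iff_ne_zero.mpr hV.det_pos.ne'
  have hCC : C * C⁻¹ = 1 := mul_nonsing_inv C hC
  have hTT : (Cᵀ)⁻¹ * Cᵀ = 1 := nonsing_inv_mul Cᵀ hCT
  have hTT' : Cᵀ * (Cᵀ)⁻¹ = 1 := mul_nonsing_inv Cᵀ hCT
  have hC'C : C⁻¹ * C = 1 := nonsing_inv_mul C hC
  have hVV : V * V⁻¹ = 1 := mul_nonsing_inv V hVdet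
  set W := C⁻¹ * V * (Cᵀ)⁻¹ with hW
  have ht1 : (0:ℝ) < t + 1 := by linarith
  have h1 : C * (t • W) * Cᵀ = t • V := by
    rw [hW, Matrix.mul_smul, Matrix.smul_mul]
    congr 1
    calc C * (C⁻¹ * V * (Cᵀ)⁻¹) * Cᵀ = (C * C⁻¹) * V * ((Cᵀ)⁻¹ * Cᵀ) := by
          noncomm_ring
      _ = V := by rw [hCC, hTT, Matrix.one_mul, Matrix.mul_one]
  have h2 : C * (t • W) * Cᵀ + V = (t + 1) • V := by
    rw [h1, add_smul, one_smul]
  have h3 : (C * (t • W) * Cᵀ + V)⁻¹ = (t + 1)⁻¹ • V⁻¹ := by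
    rw [h2]
    apply inv_eq_left_inv
    rw [Matrix.smul_mul, Matrix.mul_smul, nonsing_inv_mul V hVdet, smul_smul,
      inv_mul_cancel₀ ht1.ne', one_smul]
  have hWterm : W * Cᵀ * V⁻¹ * C * W = W := by
    rw [hW]
    calc C⁻¹ * V * (Cᵀ)⁻¹ * Cᵀ * V⁻¹ * C * (C⁻¹ * V * (Cᵀ)⁻¹)
        = C⁻¹ * ((V * ((Cᵀ)⁻¹ * Cᵀ) * V⁻¹) * (C * C⁻¹)) * (V * (Cᵀ)⁻¹) := by
          noncomm_ring
      _ = C⁻¹ * V * (Cᵀ)⁻¹ := by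
          rw [hTT, hCC, Matrix.mul_one, Matrix.mul_one, hVV, Matrix.mul_one,
            Matrix.mul_assoc]
  have hmain : (t • W) * Cᵀ * (C * (t • W) * Cᵀ + V)⁻¹ * C * (t • W)
      = (t * t * (t + 1)⁻¹) • (W * Cᵀ * V⁻¹ * C * W) := by
    rw [h3]
    simp only [Matrix.smul_mul, Matrix.mul_smul, smul_smul]
    ring_nf
  have key : t • W - (t • W) * Cᵀ * (C * (t • W) * Cᵀ + V)⁻¹ * C * (t • W)
      = (t / (t + 1)) • W := by
    rw [hmain, hWterm, ← sub_smul]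
    congr 1
    field_simp
    ring
  refine ⟨key, ?_⟩
  rw [key]
  have hrw : W - (t / (t + 1)) • W = (1 - t / (t + 1)) • W := by
    rw [sub_smul, one_smul]
  rw [hrw]
  have hcoef : (0:ℝ) ≤ 1 - t / (t + 1) := by
    rw [sub_nonneg, div_le_one ht1]; linarith
  have hWpsd : W.PosSemidef := by
    have := hV.posSemidef.mul_mul_conjTranspose_same C⁻¹
    simpa [hW, conjTranspose_nonsing_inv, transpose_nonsing_inv, Matrix.mul_assoc]
      using this
  refine ⟨?_, fun x => ?_⟩
  · show ((1 - t / (t + 1)) • W)ᴴ = _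
    rw [conjTranspose_smul, hWpsd.1.eq]
    simp
  · have := hWpsd.2 x
    convert mul_nonneg hcoef this using 1
    simp only [Finsupp.sum, Finset.mul_sum, Matrix.smul_apply, smul_eq_mul]
    exact Finset.sum_congr rfl fun i _ => Finset.sum_congr rfl fun j _ => by ring
end

section
/- Let H be an n×n real matrix and Σ, W, M symmetric positive definite n×n matrices satisfying Σ = H(Σ⁻¹ + M)⁻¹Hᵀ + W. If Σ ⪰ W, then tr(Σ) − tr(W) ≥ tr(HᵀH)·λ_min(W) / (1 + λ_min(W)·λ_max(M)). -/
open Matrix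
open scoped MatrixOrder

variable {n : ℕ}

lemma psd_smul {A : Matrix (Fin n) (Fin n) ℝ} (hA : A.PosSemidef) {c : ℝ} (hc : 0 ≤ c) :
    (c • A).PosSemidef := by
  refine PosSemidef.of_dotProduct_mulVec_nonneg ?_ fun x => ?_
  · unfold Matrix.IsHermitian
    rw [conjTranspose_smul, hA.1.eq]
    simp
  · rw [smul_mulVec, dotProduct_smul, smul_eq_mul]
    exact mul_nonneg hc (hA.dotProduct_mulVec_nonneg x)

lemma psd_trace_nonneg {A : Matrix (Fin n) (Fin n) ℝ} (hA : A.PosSemidef) : 0 ≤ A.trace := by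
  rw [Matrix.trace]
  refine Finset.sum_nonneg fun i _ => ?_
  have := hA.dotProduct_mulVec_nonneg (Pi.single i 1)
  simpa [dotProduct, mulVec, Pi.single_apply] using this

lemma eig_lb_psd {A : Matrix (Fin n) (Fin n) ℝ} (hA : A.IsHermitian) {c : ℝ}
    (h : ∀ i, c ≤ hA.eigenvalues i) : (A - c • 1).PosSemidef := by
  have hU : (hA.eigenvectorUnitary : Matrix (Fin n) (Fin n) ℝ) *
      star (hA.eigenvectorUnitary : Matrix (Fin n) (Fin n) ℝ) = 1 :=
    Matrix.mem_unitaryGroup_iff.mp (hA.eigenvectorUnitary).2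
  have key : A - c • 1 = (hA.eigenvectorUnitary : Matrix (Fin n) (Fin n) ℝ) *
      (diagonal (fun i => hA.eigenvalues i - c)) *
      star (hA.eigenvectorUnitary : Matrix (Fin n) (Fin n) ℝ) := by
    have hd : diagonal (fun i => hA.eigenvalues i - c) =
        diagonal (RCLike.ofReal ∘ hA.eigenvalues) - c • 1 := by
      rw [smul_one_eq_diagonal, ← diagonal_sub]
      rfl
    rw [hd, Matrix.mul_sub, Matrix.sub_mul]
    congr 1
    · exact hA.spectral_theorem
    · rw [Matrix.mul_smul, Matrix.smul_mul, Matrix.mul_one, hU]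
  rw [key]
  exact (posSemidef_diagonal_iff.mpr fun i => sub_nonneg.mpr (h i)).mul_mul_conjTranspose_same _

lemma eig_ub_psd {A : Matrix (Fin n) (Fin n) ℝ} (hA : A.IsHermitian) {c : ℝ}
    (h : ∀ i, hA.eigenvalues i ≤ c) : (c • 1 - A).PosSemidef := by
  have hU : (hA.eigenvectorUnitary : Matrix (Fin n) (Fin n) ℝ) *
      star (hA.eigenvectorUnitary : Matrix (Fin n) (Fin n) ℝ) = 1 :=
    Matrix.mem_unitaryGroup_iff.mp (hA.eigenvectorUnitary).2
  have key : c • 1 - A = (hA.eigenvectorUnitary : Matrix (Fin n) (Fin n) ℝ) *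
      (diagonal (fun i => c - hA.eigenvalues i)) *
      star (hA.eigenvectorUnitary : Matrix (Fin n) (Fin n) ℝ) := by
    have hd : diagonal (fun i => c - hA.eigenvalues i) =
        c • 1 - diagonal (RCLike.ofReal ∘ hA.eigenvalues) := by
      rw [smul_one_eq_diagonal, ← diagonal_sub]
      rfl
    rw [hd, Matrix.mul_sub, Matrix.sub_mul]
    congr 1
    · rw [Matrix.mul_smul, Matrix.smul_mul, Matrix.mul_one, hU]
    · exact hA.spectral_theorem
  rw [key]
  exact (posSemidef_diagonal_iff.mpr fun i => sub_nonneg.mpr (h i)).mul_mul_conjTranspose_same _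


lemma psd_smul' {A : Matrix (Fin n) (Fin n) ℝ} (hA : A.PosSemidef) {c : ℝ} (hc : 0 ≤ c) :
    (c • A).PosSemidef := by
  refine PosSemidef.of_dotProduct_mulVec_nonneg ?_ fun x => ?_
  · unfold Matrix.IsHermitian
    rw [conjTranspose_smul, hA.1.eq]; simp
  · rw [smul_mulVec, dotProduct_smul, smul_eq_mul]
    exact mul_nonneg hc (hA.dotProduct_mulVec_nonneg x)

lemma sqrt_conj {A D : Matrix (Fin n) (Fin n) ℝ} (hA : A.PosSemidef)
    (hD : D.PosSemidef) : (CFC.sqrt A * D * CFC.sqrt A).PosSemidef := by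
  have := hD.mul_mul_conjTranspose_same (CFC.sqrt A)
  rwa [(CFC.sqrt_nonneg A).posSemidef.1.eq] at this


lemma sqrt_sandwich {A : Matrix (Fin n) (Fin n) ℝ} (hA : A.PosSemidef) :
    CFC.sqrt A * A * CFC.sqrt A = A * A := by
  have h4 : CFC.sqrt A * (CFC.sqrt A * CFC.sqrt A) * CFC.sqrt A = CFC.sqrt A * A * CFC.sqrt A := by
    rw [CFC.sqrt_mul_sqrt_self A hA.nonneg]
  have h5 : CFC.sqrt A * (CFC.sqrt A * CFC.sqrt A) * CFC.sqrt A =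
      (CFC.sqrt A * CFC.sqrt A) * (CFC.sqrt A * CFC.sqrt A) := by
    simp only [Matrix.mul_assoc]
  rw [← h4, h5, CFC.sqrt_mul_sqrt_self A hA.nonneg]

lemma conj_ub {A : Matrix (Fin n) (Fin n) ℝ} (hA : A.PosSemidef) {c : ℝ}
    (h : (c • 1 - A).PosSemidef) : (c • A - A * A).PosSemidef := by
  have key : c • A - A * A = CFC.sqrt A * (c • 1 - A) * CFC.sqrt A := by
    rw [Matrix.mul_sub, Matrix.sub_mul]
    congr 1
    · rw [Matrix.mul_smul, Matrix.smul_mul, Matrix.mul_one, CFC.sqrt_mul_sqrt_self A hA.nonneg]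
    · exact (sqrt_sandwich hA).symm
  rw [key]; exact sqrt_conj hA h

lemma conj_lb {A : Matrix (Fin n) (Fin n) ℝ} (hA : A.PosSemidef) {c : ℝ}
    (h : (A - c • 1).PosSemidef) : (A * A - c • A).PosSemidef := by
  have key : A * A - c • A = CFC.sqrt A * (A - c • 1) * CFC.sqrt A := by
    rw [Matrix.mul_sub, Matrix.sub_mul]
    congr 1
    · exact (sqrt_sandwich hA).symm
    · rw [Matrix.mul_smul, Matrix.smul_mul, Matrix.mul_one, CFC.sqrt_mul_sqrt_self A hA.nonneg]
  rw [key]; exact sqrt_conj hA h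

lemma inv_conj_psd {A C : Matrix (Fin n) (Fin n) ℝ} (hA : A.IsHermitian) (hC : C.PosSemidef) :
    (A⁻¹ * C * A⁻¹).PosSemidef := by
  have := hC.mul_mul_conjTranspose_same A⁻¹
  rwa [hA.inv.eq] at this

lemma inv_lb {A : Matrix (Fin n) (Fin n) ℝ} (hA : A.PosDef) {c : ℝ} (hc : 0 < c)
    (h : (c • 1 - A).PosSemidef) : (A⁻¹ - c⁻¹ • 1).PosSemidef := by
  have hd := (Matrix.isUnit_iff_isUnit_det A).mp hA.isUnit
  have h1 : A * A⁻¹ = 1 := mul_nonsing_inv _ hd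
  have h2 : A⁻¹ * A = 1 := nonsing_inv_mul _ hd
  have key : A⁻¹ - c⁻¹ • 1 = c⁻¹ • (A⁻¹ * (c • A - A * A) * A⁻¹) := by
    simp only [Matrix.mul_sub, Matrix.sub_mul, smul_sub, Matrix.mul_smul, Matrix.smul_mul,
      Matrix.mul_assoc, h1, Matrix.mul_one, h2, smul_smul,
      inv_mul_cancel₀ hc.ne', one_smul]
    rw [Matrix.one_mul]
  rw [key]
  exact psd_smul' (inv_conj_psd hA.1 (conj_ub hA.posSemidef h)) (by positivity)

lemma inv_ub {A : Matrix (Fin n) (Fin n) ℝ} (hA : A.PosDef) {c : ℝ} (hc : 0 < c)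
    (h : (A - c • 1).PosSemidef) : (c⁻¹ • 1 - A⁻¹).PosSemidef := by
  have hd := (Matrix.isUnit_iff_isUnit_det A).mp hA.isUnit
  have h1 : A * A⁻¹ = 1 := mul_nonsing_inv _ hd
  have h2 : A⁻¹ * A = 1 := nonsing_inv_mul _ hd
  have key : c⁻¹ • 1 - A⁻¹ = c⁻¹ • (A⁻¹ * (A * A - c • A) * A⁻¹) := by
    simp only [Matrix.mul_sub, Matrix.sub_mul, smul_sub, Matrix.mul_smul, Matrix.smul_mul,
      Matrix.mul_assoc, h1, Matrix.mul_one, h2, smul_smul,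
      inv_mul_cancel₀ hc.ne', one_smul]
    rw [Matrix.one_mul]
  rw [key]
  exact psd_smul' (inv_conj_psd hA.1 (conj_lb hA.posSemidef h)) (by positivity)

theorem stmt_9 (n : ℕ) (hn : 0 < n) (H Sig W M : Matrix (Fin n) (Fin n) ℝ)
    (hSig : Sig.PosDef) (hW : W.PosDef) (hM : M.IsHermitian) (hMpsd : M.PosSemidef)
    (hRic : Sig = H * (Sig⁻¹ + M)⁻¹ * Hᵀ + W) (hSW : (Sig - W).PosSemidef) :
    (Hᵀ * H).trace * (⨅ i, hW.1.eigenvalues i)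
        / (1 + (⨅ i, hW.1.eigenvalues i) * ⨆ i, hM.eigenvalues i)
      ≤ Sig.trace - W.trace := by
  haveI : Nonempty (Fin n) := ⟨⟨0, hn⟩⟩
  set a := ⨅ i, hW.1.eigenvalues i with ha_def
  set b := ⨆ i, hM.eigenvalues i with hb_def
  have hbdW : BddBelow (Set.range hW.1.eigenvalues) := Set.Finite.bddBelow (Set.finite_range _)
  have hbdM : BddAbove (Set.range hM.eigenvalues) := Set.Finite.bddAbove (Set.finite_range _)
  have ha_le : ∀ i, a ≤ hW.1.eigenvalues i := fun i => ciInf_le hbdW i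
  have hb_ge : ∀ i, hM.eigenvalues i ≤ b := fun i => le_ciSup hbdM i
  have ha_pos : 0 < a := by
    obtain ⟨i, hi⟩ := exists_eq_ciInf_of_finite (f := hW.1.eigenvalues)
    rw [ha_def, ← hi]; exact hW.eigenvalues_pos i
  have hb_nonneg : 0 ≤ b :=
    le_trans (hMpsd.eigenvalues_nonneg (Classical.arbitrary _)) (hb_ge _)
  set k := a⁻¹ + b with hk_def
  have hk_pos : 0 < k := by positivity
  have hWa : (W - a • 1).PosSemidef := eig_lb_psd hW.1 ha_le
  have hSa : (Sig - a • 1).PosSemidef := by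
    have h := hSW.add hWa
    have e : Sig - W + (W - a • 1) = Sig - a • 1 := by abel
    rwa [e] at h
  have hSinv : (a⁻¹ • (1 : Matrix (Fin n) (Fin n) ℝ) - Sig⁻¹).PosSemidef :=
    inv_ub hSig ha_pos hSa
  have hMb : (b • (1 : Matrix (Fin n) (Fin n) ℝ) - M).PosSemidef := eig_ub_psd hM hb_ge
  have hBub : (k • (1 : Matrix (Fin n) (Fin n) ℝ) - (Sig⁻¹ + M)).PosSemidef := by
    have h := hSinv.add hMb
    have e : a⁻¹ • (1 : Matrix (Fin n) (Fin n) ℝ) - Sig⁻¹ + (b • 1 - M)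
        = k • 1 - (Sig⁻¹ + M) := by
      rw [hk_def, add_smul]; abel
    rwa [e] at h
  have hB : (Sig⁻¹ + M).PosDef := hSig.inv.add_posSemidef hMpsd
  have hinv : ((Sig⁻¹ + M)⁻¹ - k⁻¹ • 1).PosSemidef := inv_lb hB hk_pos hBub
  have hconj := hinv.mul_mul_conjTranspose_same H
  have hHt : Hᴴ = Hᵀ := conjTranspose_eq_transpose_of_trivial H
  rw [hHt] at hconj
  have e2 : H * ((Sig⁻¹ + M)⁻¹ - k⁻¹ • 1) * Hᵀ
      = H * (Sig⁻¹ + M)⁻¹ * Hᵀ - k⁻¹ • (H * Hᵀ) := by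
    rw [Matrix.mul_sub, Matrix.sub_mul, Matrix.mul_smul, Matrix.smul_mul, Matrix.mul_one]
  rw [e2] at hconj
  have htr := psd_trace_nonneg hconj
  rw [trace_sub, trace_smul, smul_eq_mul, sub_nonneg] at htr
  have hST : Sig.trace - W.trace = (H * (Sig⁻¹ + M)⁻¹ * Hᵀ).trace := by
    conv_lhs => rw [hRic]
    rw [trace_add]; ring
  have hden : 0 < 1 + a * b := by positivity
  have hk_eq : a / (1 + a * b) = k⁻¹ := by
    rw [hk_def]
    field_simp
  rw [hST, mul_div_assoc, hk_eq, trace_mul_comm, mul_comm]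
  exact htr
end

section
/- Let H be an n×n real matrix and Σ, W symmetric positive definite n×n matrices, M symmetric positive definite, satisfying Σ = H(Σ⁻¹ + M)⁻¹Hᵀ + W. Then tr(Σ) − tr(W) ≤ tr(HᵀH)/λ_min(M). -/
open Matrix
set_option maxHeartbeats 1000000

lemma aux_trace_nonneg {n : ℕ} {A : Matrix (Fin n) (Fin n) ℝ} (h : A.PosSemidef) :
    0 ≤ A.trace := by
  rw [Matrix.trace]
  refine Finset.sum_nonneg fun i _ => ?_
  have := h.dotProduct_mulVec_nonneg (Pi.single i 1)
  simpa [Matrix.mulVec_single, dotProduct, Pi.single_apply] using this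

lemma aux_smul_psd {n : ℕ} {A : Matrix (Fin n) (Fin n) ℝ} (h : A.PosSemidef) {c : ℝ}
    (hc : 0 ≤ c) : (c • A).PosSemidef := by
  refine ⟨?_, fun x => ?_⟩
  · unfold Matrix.IsHermitian
    rw [Matrix.conjTranspose_smul, h.1]
    simp
  · exact (h.smul hc).2 x

lemma aux_sub_smul_one {n : ℕ} {M : Matrix (Fin n) (Fin n) ℝ} (hM : M.IsHermitian) {c : ℝ}
    (hc : ∀ i, c ≤ hM.eigenvalues i) : (M - c • 1).PosSemidef := by
  set U := (hM.eigenvectorUnitary : Matrix (Fin n) (Fin n) ℝ)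
  have hU : U * star U = 1 := Matrix.mem_unitaryGroup_iff.mp hM.eigenvectorUnitary.2
  have h1 : M - c • 1 = U * (Matrix.diagonal (fun i => hM.eigenvalues i - c)) * star U := by
    have hspec := hM.spectral_theorem
    simp only [Unitary.conjStarAlgAut_apply, Unitary.coe_star] at hspec
    have : Matrix.diagonal (fun i => hM.eigenvalues i - c)
        = Matrix.diagonal (RCLike.ofReal ∘ hM.eigenvalues) - c • 1 := by
      ext i j
      by_cases hij : i = j <;> simp [Matrix.diagonal, hij, Matrix.one_apply]
    rw [this, Matrix.mul_sub, Matrix.sub_mul, ← hspec]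
    congr 1
    rw [Matrix.mul_smul, Matrix.smul_mul, mul_one, hU]
  rw [h1]
  have hd : (Matrix.diagonal (fun i => hM.eigenvalues i - c)).PosSemidef :=
    Matrix.PosSemidef.diagonal (fun i => by simpa using sub_nonneg.mpr (hc i))
  have := hd.mul_mul_conjTranspose_same U
  simpa [Matrix.star_eq_conjTranspose] using this

theorem stmt_10 (n : ℕ) (hn : 0 < n) (H Sig W M : Matrix (Fin n) (Fin n) ℝ)
    (hSig : Sig.PosDef) (hW : W.PosDef) (hM : M.PosDef)
    (hRic : Sig = H * (Sig⁻¹ + M)⁻¹ * Hᵀ + W) :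
    Sig.trace - W.trace ≤ (Hᵀ * H).trace / ⨅ i, hM.1.eigenvalues i := by
  haveI : Nonempty (Fin n) := ⟨⟨0, hn⟩⟩
  set c : ℝ := ⨅ i, hM.1.eigenvalues i with hc_def
  have hbdd : BddBelow (Set.range fun i => hM.1.eigenvalues i) :=
    (Set.finite_range _).bddBelow
  have hc_le : ∀ i, c ≤ hM.1.eigenvalues i := fun i => ciInf_le hbdd i
  have hc0 : 0 < c := by
    obtain ⟨i, hi⟩ := exists_eq_ciInf_of_finite (f := fun i => hM.1.eigenvalues i)
    rw [hc_def, ← hi]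
    exact hM.eigenvalues_pos i
  set B : Matrix (Fin n) (Fin n) ℝ := Sig⁻¹ + M with hB_def
  have hB : B.PosDef := hSig.inv.add_posSemidef hM.posSemidef
  have hBdet : IsUnit B.det := hB.det_pos.ne'.isUnit
  have hBinv : B⁻¹ * B = 1 := Matrix.nonsing_inv_mul B hBdet
  have hBinv' : B * B⁻¹ = 1 := Matrix.mul_nonsing_inv B hBdet
  -- B - c • 1 is PSD
  have h2 : (B - c • 1).PosSemidef := by
    have hM2 : (M - c • 1).PosSemidef := aux_sub_smul_one hM.1 hc_le
    have := hSig.inv.posSemidef.add hM2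
    have heq : Sig⁻¹ + (M - c • 1) = B - c • 1 := by rw [hB_def]; abel
    rwa [heq] at this
  -- conjugate by sqrt B
  open scoped MatrixOrder in set S := CFC.sqrt B with hS_def
  have hSS : S * S = B := open scoped MatrixOrder in CFC.sqrt_mul_sqrt_self B hB.posSemidef.nonneg
  have hSh : Sᴴ = S := open scoped MatrixOrder in (CFC.sqrt_nonneg B).posSemidef.1
  have h3 : (B * B - c • B).PosSemidef := by
    have := h2.mul_mul_conjTranspose_same S
    rw [hSh] at this
    have heq : S * (B - c • 1) * S = B * B - c • B := by
      rw [Matrix.mul_sub, Matrix.sub_mul, Matrix.mul_smul, Matrix.smul_mul, mul_one, hSS,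
        ← hSS]
      simp only [mul_assoc]
    rwa [heq] at this
  -- conjugate by B⁻¹
  have h4 : (1 - c • B⁻¹).PosSemidef := by
    have := h3.mul_mul_conjTranspose_same B⁻¹
    have hBih : B⁻¹ᴴ = B⁻¹ := hB.inv.1
    rw [hBih] at this
    have heq : B⁻¹ * (B * B - c • B) * B⁻¹ = 1 - c • B⁻¹ := by
      rw [Matrix.mul_sub, Matrix.sub_mul, Matrix.mul_smul, Matrix.smul_mul]
      congr 1
      · rw [← mul_assoc, hBinv, one_mul, hBinv']
      · rw [hBinv, one_mul]
    rwa [heq] at this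
  -- scale by c⁻¹
  have h5 : (c⁻¹ • (1 : Matrix (Fin n) (Fin n) ℝ) - B⁻¹).PosSemidef := by
    have := aux_smul_psd h4 (le_of_lt (inv_pos.mpr hc0))
    rwa [smul_sub, smul_smul, inv_mul_cancel₀ hc0.ne', one_smul] at this
  -- conjugate by H
  have h6 : (H * (c⁻¹ • (1 : Matrix (Fin n) (Fin n) ℝ) - B⁻¹) * Hᵀ).PosSemidef := by
    have := h5.mul_mul_conjTranspose_same H
    rwa [Matrix.conjTranspose_eq_transpose_of_trivial] at this
  have h7 := aux_trace_nonneg h6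
  have hexp : H * (c⁻¹ • (1 : Matrix (Fin n) (Fin n) ℝ) - B⁻¹) * Hᵀ
      = c⁻¹ • (H * Hᵀ) - H * B⁻¹ * Hᵀ := by
    rw [Matrix.mul_sub, Matrix.sub_mul, Matrix.mul_smul, Matrix.smul_mul, mul_one]
  rw [hexp, Matrix.trace_sub, Matrix.trace_smul, sub_nonneg] at h7
  have htr : Sig.trace - W.trace = (H * B⁻¹ * Hᵀ).trace := by
    rw [hRic, Matrix.trace_add]; ring
  rw [htr, div_eq_inv_mul]
  calc (H * B⁻¹ * Hᵀ).trace ≤ c⁻¹ • (H * Hᵀ).trace := h7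
    _ = c⁻¹ * (Hᵀ * H).trace := by rw [smul_eq_mul, Matrix.trace_mul_comm]
end

section
/- Let C be an n×n invertible diagonal real matrix and V = σ²I with σ > 0, and let Σ ≻ 0 be symmetric. Define Σ̄ = (CᵀV⁻¹C + Σ⁻¹)⁻¹. If additionally Σ ⪰ W for a symmetric W ≻ 0, then ln det Σ̄ ≥ n·ln(σ_u²/(C_u² + σ_u²/λ_min(W))), where C_u²/σ_u² = λ_max(CᵀV⁻¹C). -/
open Matrix

theorem quad_repr (n : ℕ) (A : Matrix (Fin n) (Fin n) ℝ) (hA : A.IsHermitian) (x : Fin n → ℝ) :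
    ∃ y : Fin n → ℝ, (x ⬝ᵥ (A *ᵥ x) = ∑ i, hA.eigenvalues i * y i ^ 2) ∧ (x ⬝ᵥ x = ∑ i, y i ^ 2) := by
  set U : Matrix (Fin n) (Fin n) ℝ := (hA.eigenvectorUnitary : Matrix (Fin n) (Fin n) ℝ) with hU
  have hUU : U * star U = 1 := (Matrix.mem_unitaryGroup_iff).mp hA.eigenvectorUnitary.2
  have hstar : star U = Uᵀ := U.conjTranspose_eq_transpose_of_trivial
  set y : Fin n → ℝ := Uᵀ *ᵥ x with hy
  have hyx : y = x ᵥ* U := by rw [hy, mulVec_transpose]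
  refine ⟨y, ?_, ?_⟩
  · conv_lhs => rw [hA.spectral_theorem]; simp only [Unitary.conjStarAlgAut_apply, Unitary.coe_star]
    rw [hstar, ← mulVec_mulVec, ← mulVec_mulVec, dotProduct_mulVec, ← hyx, hy]
    simp [mulVec_diagonal, dotProduct, Function.comp]
    exact Finset.sum_congr rfl fun i _ => by ring
  · have : x ⬝ᵥ ((U * Uᵀ) *ᵥ x) = x ⬝ᵥ x := by rw [← hstar, hUU, one_mulVec]
    rw [← this, ← mulVec_mulVec, dotProduct_mulVec, ← hyx, hy]
    simp [dotProduct]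
    exact Finset.sum_congr rfl fun i _ => by ring

theorem form_le_of_eig_le (n : ℕ) (A : Matrix (Fin n) (Fin n) ℝ) (hA : A.IsHermitian) (c : ℝ)
    (h : ∀ i, hA.eigenvalues i ≤ c) (x : Fin n → ℝ) : x ⬝ᵥ (A *ᵥ x) ≤ c * (x ⬝ᵥ x) := by
  obtain ⟨y, h1, h2⟩ := quad_repr n A hA x
  rw [h1, h2, Finset.mul_sum]
  exact Finset.sum_le_sum fun i _ => mul_le_mul_of_nonneg_right (h i) (sq_nonneg _)

theorem le_form_of_le_eig (n : ℕ) (A : Matrix (Fin n) (Fin n) ℝ) (hA : A.IsHermitian) (a : ℝ)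
    (h : ∀ i, a ≤ hA.eigenvalues i) (x : Fin n → ℝ) : a * (x ⬝ᵥ x) ≤ x ⬝ᵥ (A *ᵥ x) := by
  obtain ⟨y, h1, h2⟩ := quad_repr n A hA x
  rw [h1, h2, Finset.mul_sum]
  exact Finset.sum_le_sum fun i _ => mul_le_mul_of_nonneg_right (h i) (sq_nonneg _)

theorem eigbasis_dot (n : ℕ) (A : Matrix (Fin n) (Fin n) ℝ) (hA : A.IsHermitian) (i : Fin n) :
    (⇑(hA.eigenvectorBasis i) : Fin n → ℝ) ⬝ᵥ ⇑(hA.eigenvectorBasis i) = 1 := by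
  have hnorm := hA.eigenvectorBasis.orthonormal.1 i
  have h2 : (inner ℝ (hA.eigenvectorBasis i) (hA.eigenvectorBasis i) : ℝ) = 1 := by
    rw [real_inner_self_eq_norm_sq, hnorm]; norm_num
  rwa [EuclideanSpace.inner_eq_star_dotProduct, star_trivial] at h2

theorem eig_le_of_form_le (n : ℕ) (A : Matrix (Fin n) (Fin n) ℝ) (hA : A.IsHermitian) (c : ℝ)
    (h : ∀ x : Fin n → ℝ, x ⬝ᵥ (A *ᵥ x) ≤ c * (x ⬝ᵥ x)) (i : Fin n) : hA.eigenvalues i ≤ c := by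
  have hv := eigbasis_dot n A hA i
  have heq := hA.eigenvalues_eq i
  rw [star_trivial] at heq
  calc hA.eigenvalues i = _ := heq
    _ ≤ c * 1 := by rw [← hv]; simpa using h (⇑(hA.eigenvectorBasis i))
    _ = c := mul_one c

theorem stmt_17 (n : ℕ) (hn : 0 < n) (C Sig W : Matrix (Fin n) (Fin n) ℝ) (σ : ℝ)
    (hσ : 0 < σ) (hCdiag : C.IsDiag) (hC : IsUnit C.det)
    (hSig : Sig.PosDef) (hW : W.PosDef) (hSW : (Sig - W).PosSemidef) :
    n * Real.log (σ ^ 2 / ((⨆ i, (C i i) ^ 2) + σ ^ 2 / ⨅ i, hW.1.eigenvalues i))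
      ≤ Real.log ((Cᵀ * (σ ^ 2 • (1 : Matrix (Fin n) (Fin n) ℝ))⁻¹ * C + Sig⁻¹)⁻¹).det := by
  haveI : Nonempty (Fin n) := Fin.pos_iff_nonempty.mp hn
  have hσ2 : (0:ℝ) < σ ^ 2 := by positivity
  set a : ℝ := ⨅ i, hW.1.eigenvalues i with ha_def
  set b : ℝ := ⨆ i, (C i i) ^ 2 with hb_def
  -- basic facts on a and b
  have ha_le : ∀ i, a ≤ hW.1.eigenvalues i := fun i =>
    ciInf_le (Set.Finite.bddBelow (Set.finite_range _)) i
  have ha_pos : 0 < a := by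
    obtain ⟨i, hi⟩ := exists_eq_ciInf_of_finite (f := fun i => hW.1.eigenvalues i)
    rw [ha_def, ← hi]
    exact hW.eigenvalues_pos i
  have hb_le : ∀ j, (C j j) ^ 2 ≤ b := fun j =>
    le_ciSup (f := fun i => (C i i) ^ 2) (Set.Finite.bddAbove (Set.finite_range _)) j
  have hb0 : 0 ≤ b := le_trans (sq_nonneg _) (hb_le (Classical.arbitrary _))
  set c : ℝ := (σ ^ 2)⁻¹ * b + a⁻¹ with hc_def
  have hc_pos : 0 < c := by positivity
  -- simplify the matrix
  have hVinv : (σ ^ 2 • (1 : Matrix (Fin n) (Fin n) ℝ))⁻¹ = (σ ^ 2)⁻¹ • 1 := by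
    apply inv_eq_right_inv
    rw [smul_mul_smul_comm, one_mul, mul_inv_cancel₀ hσ2.ne', one_smul]
  set D : Matrix (Fin n) (Fin n) ℝ := diagonal (fun i => (C i i) ^ 2) with hD_def
  have hCC : Cᵀ * ((σ ^ 2)⁻¹ • 1) * C = (σ ^ 2)⁻¹ • D := by
    rw [Matrix.mul_smul, Matrix.mul_one, Matrix.smul_mul]
    congr 1
    rw [← hCdiag.diagonal_diag, diagonal_transpose, diagonal_mul_diagonal, hD_def]
    congr 1
    funext i
    simp [Matrix.diag, sq]
  set M : Matrix (Fin n) (Fin n) ℝ := Cᵀ * (σ ^ 2 • (1 : Matrix (Fin n) (Fin n) ℝ))⁻¹ * C + Sig⁻¹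
    with hM_def
  have hM_eq : M = (σ ^ 2)⁻¹ • D + Sig⁻¹ := by rw [hM_def, hVinv, hCC]
  have hDpsd : ((σ ^ 2)⁻¹ • D).PosSemidef := by
    rw [hD_def, ← diagonal_smul]
    refine PosSemidef.diagonal ?_
    intro i
    simp only [Pi.smul_apply, smul_eq_mul, Pi.zero_apply]
    positivity
  have hM : M.PosDef := by
    rw [hM_eq]; exact Matrix.PosDef.posSemidef_add hDpsd hSig.inv
  -- quadratic form bound for Sig⁻¹
  have hSinvH : (Sig⁻¹).IsHermitian := hSig.inv.1
  have hSinv_eig : ∀ i, hSinvH.eigenvalues i ≤ a⁻¹ := by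
    intro i
    set v : Fin n → ℝ := ⇑(hSinvH.eigenvectorBasis i) with hv_def
    set μ : ℝ := hSinvH.eigenvalues i with hμ_def
    have hμ_pos : 0 < μ := hSig.inv.eigenvalues_pos i
    have hvv : v ⬝ᵥ v = 1 := eigbasis_dot n _ hSinvH i
    have hmul : Sig⁻¹ *ᵥ v = μ • v := hSinvH.mulVec_eigenvectorBasis i
    have hSS : Sig * Sig⁻¹ = 1 := mul_nonsing_inv Sig hSig.det_pos.ne'.isUnit
    have hSv : Sig *ᵥ v = μ⁻¹ • v := by
      have h1 : μ • (Sig *ᵥ v) = v := by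
        rw [← mulVec_smul, ← hmul, mulVec_mulVec, hSS, one_mulVec]
      have := congrArg (fun w => μ⁻¹ • w) h1
      simpa [smul_smul, inv_mul_cancel₀ hμ_pos.ne'] using this
    have hform : a * (v ⬝ᵥ v) ≤ v ⬝ᵥ (Sig *ᵥ v) := by
      have hW_bd : a * (v ⬝ᵥ v) ≤ v ⬝ᵥ (W *ᵥ v) := le_form_of_le_eig n W hW.1 a ha_le v
      have hsub : 0 ≤ v ⬝ᵥ ((Sig - W) *ᵥ v) := by
        have := hSW.dotProduct_mulVec_nonneg v; rwa [star_trivial] at this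
      rw [sub_mulVec, dotProduct_sub, sub_nonneg] at hsub
      linarith
    rw [hvv, mul_one, hSv] at hform
    rw [dotProduct_smul, hvv, smul_eq_mul, mul_one] at hform
    calc μ = (μ⁻¹)⁻¹ := (inv_inv μ).symm
      _ ≤ a⁻¹ := by
          apply inv_anti₀ ha_pos hform
  -- quadratic form bound for M
  have hMform : ∀ x : Fin n → ℝ, x ⬝ᵥ (M *ᵥ x) ≤ c * (x ⬝ᵥ x) := by
    intro x
    have h1 : x ⬝ᵥ (((σ ^ 2)⁻¹ • D) *ᵥ x) ≤ ((σ ^ 2)⁻¹ * b) * (x ⬝ᵥ x) := by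
      rw [smul_mulVec, dotProduct_smul, smul_eq_mul, mul_assoc]
      apply mul_le_mul_of_nonneg_left _ (by positivity)
      simp only [dotProduct, mulVec_diagonal, hD_def]
      calc ∑ i, x i * ((C i i) ^ 2 * x i) ≤ ∑ i, b * (x i * x i) := by
            apply Finset.sum_le_sum
            intro i _
            have : x i * ((C i i) ^ 2 * x i) = (C i i) ^ 2 * (x i)^2 := by ring
            rw [this]
            calc (C i i) ^ 2 * (x i)^2 ≤ b * (x i)^2 :=
                  mul_le_mul_of_nonneg_right (hb_le i) (sq_nonneg _)
              _ = b * (x i * x i) := by ring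
        _ = b * ∑ i, x i * x i := by rw [Finset.mul_sum]
    have h2 : x ⬝ᵥ (Sig⁻¹ *ᵥ x) ≤ a⁻¹ * (x ⬝ᵥ x) :=
      form_le_of_eig_le n _ hSinvH a⁻¹ hSinv_eig x
    rw [hM_eq, add_mulVec, dotProduct_add, hc_def, add_mul]
    exact add_le_add h1 h2
  -- eigenvalues of M
  have hMh : M.IsHermitian := hM.1
  have hMeig_le : ∀ i, hMh.eigenvalues i ≤ c := eig_le_of_form_le n M hMh c hMform
  have hMeig_pos : ∀ i, 0 < hMh.eigenvalues i := fun i => hM.eigenvalues_pos i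
  have hdet : M.det = ∏ i, hMh.eigenvalues i := by
    have := hMh.det_eq_prod_eigenvalues
    simpa using this
  have hdet_pos : 0 < M.det := hM.det_pos
  have hdet_le : M.det ≤ c ^ n := by
    rw [hdet]
    calc ∏ i, hMh.eigenvalues i ≤ ∏ _i : Fin n, c :=
          Finset.prod_le_prod (fun i _ => (hMeig_pos i).le) (fun i _ => hMeig_le i)
      _ = c ^ n := by simp
  -- put it together
  have hMinv_det : (M⁻¹).det = (M.det)⁻¹ := by
    rw [det_nonsing_inv, Ring.inverse_eq_inv']
  have hlhs : σ ^ 2 / (b + σ ^ 2 / a) = c⁻¹ := by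
    rw [hc_def]; field_simp
  rw [hMinv_det, Real.log_inv, hlhs, Real.log_inv]
  have : Real.log M.det ≤ n * Real.log c := by
    calc Real.log M.det ≤ Real.log (c ^ n) := Real.log_le_log hdet_pos hdet_le
      _ = n * Real.log c := by rw [Real.log_pow]
  linarith
end
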